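/- Let c₁, c₂, c₃ be pairwise distinct oriented circles with Q(cᵢ − cⱼ) = 0 for all i ≠ j (pairwise orientedly tangent). Then the set of solutions of the oriented Apollonius problem for (c₁, c₂, c₃) is infinite. -/
import Mathlib


open RealInnerProductSpace

noncomputable section

/-- The Euclidean plane. -/
abbrev Pl := EuclideanSpace ℝ (Fin 2)

/-- The Lorentz quadratic form `Q(x, r) = ‖x‖² − r²` on the space of oriented circles. -/
def Q (c : Pl × ℝ) : ℝ := ‖c.1‖ ^ 2 - c.2 ^ 2

/-- Solutions of the oriented Apollonius problem for the oriented circles `c₁, c₂, c₃`: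
either an oriented circle `d` with `Q(d − cᵢ) = 0` for all `i`, or an oriented line
`(u, t)` (with `‖u‖ = 1`, representing `{p : ⟪u, p⟫ = t}`) tangent to every `cᵢ`,
i.e. `⟪u, xᵢ⟫ − t = rᵢ` for all `i`. The solution set is the disjoint union of the two. -/
def OrientedApolloniusSolutions (c₁ c₂ c₃ : Pl × ℝ) : Type :=
  {d : Pl × ℝ // Q (d - c₁) = 0 ∧ Q (d - c₂) = 0 ∧ Q (d - c₃) = 0} ⊕
  {l : Pl × ℝ // ‖l.1‖ = 1 ∧ ⟪l.1, c₁.1⟫ - l.2 = c₁.2 ∧ ⟪l.1, c₂.1⟫ - l.2 = c₂.2 ∧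
    ⟪l.1, c₃.1⟫ - l.2 = c₃.2}

lemma Q_sub_comm (a b : Pl × ℝ) : Q (a - b) = Q (b - a) := by
  simp [Q, norm_sub_rev]; ring

/-- If three pairwise distinct oriented circles are pairwise orientedly tangent, the
oriented Apollonius problem for them has infinitely many solutions. -/
theorem pairwise_tangent_infinite_solutions (c₁ c₂ c₃ : Pl × ℝ)
    (h₁₂ : c₁ ≠ c₂) (h₁₃ : c₁ ≠ c₃) (h₂₃ : c₂ ≠ c₃)
    (t₁₂ : Q (c₁ - c₂) = 0) (t₁₃ : Q (c₁ - c₃) = 0) (t₂₃ : Q (c₂ - c₃) = 0) :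
    Infinite (OrientedApolloniusSolutions c₁ c₂ c₃) := by
  set v : Pl × ℝ := c₁ - c₂ with hv
  set w : Pl × ℝ := c₁ - c₃ with hw
  -- bilinear pairing vanishes
  have hvw : v - w = c₃ - c₂ := by rw [hv, hw]; abel
  have hB : ⟪v.1, w.1⟫ - v.2 * w.2 = 0 := by
    have h1 : Q (v - w) = 0 := by
      rw [hvw, Q_sub_comm]; exact t₂₃
    simp only [Q, Prod.fst_sub, Prod.snd_sub, @norm_sub_sq_real Pl] at h1
    rw [Q] at t₁₂ t₁₃
    rw [hv, hw] at *
    nlinarith [t₁₂, t₁₃]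
  have hvne : v ≠ 0 := sub_ne_zero.mpr h₁₂
  have key : ∀ s : ℝ,
      Q (c₁ + s • v - c₁) = 0 ∧ Q (c₁ + s • v - c₂) = 0 ∧ Q (c₁ + s • v - c₃) = 0 := by
    intro s
    have e1 : c₁ + s • v - c₁ = s • v := by abel
    have e2 : c₁ + s • v - c₂ = (1 + s) • v := by
      rw [add_smul, one_smul, hv]; abel
    have e3 : c₁ + s • v - c₃ = w + s • v := by rw [hw, hv]; abel
    have hQsmul : ∀ t : ℝ, Q (t • v) = t ^ 2 * Q v := by
      intro t
      simp only [Q, Prod.smul_fst, Prod.smul_snd, norm_smul, Real.norm_eq_abs,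
        smul_eq_mul, mul_pow, sq_abs]
      ring
    refine ⟨?_, ?_, ?_⟩
    · rw [e1, hQsmul, t₁₂]; ring
    · rw [e2, hQsmul, t₁₂]; ring
    · rw [e3]
      have hQv : Q v = 0 := t₁₂
      have hQw : Q w = 0 := t₁₃
      simp only [Q, Prod.fst_add, Prod.snd_add, Prod.smul_fst, Prod.smul_snd,
        @norm_add_sq_real Pl, norm_smul, Real.norm_eq_abs, smul_eq_mul, mul_pow, sq_abs,
        real_inner_smul_right]
      simp only [Q] at hQv hQw
      rw [real_inner_comm] at hB
      linear_combination hQw + s ^ 2 * hQv + 2 * s * hB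
  refine Infinite.of_injective
    (fun s : ℝ => (Sum.inl ⟨c₁ + s • v, key s⟩ : OrientedApolloniusSolutions c₁ c₂ c₃))
    ?_
  intro s t hst
  have h1 : (⟨c₁ + s • v, key s⟩ : {d : Pl × ℝ // Q (d - c₁) = 0 ∧ Q (d - c₂) = 0 ∧ Q (d - c₃) = 0})
      = ⟨c₁ + t • v, key t⟩ := Sum.inl_injective hst
  have h2 : c₁ + s • v = c₁ + t • v := congrArg Subtype.val h1
  have : s • v = t • v := add_left_cancel h2
  have := sub_eq_zero.mpr this
  rw [← sub_smul] at this
  rcases smul_eq_zero.mp this with h | h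
  · linarith [sub_eq_zero.mp (by exact_mod_cast h)]
  · exact absurd h hvne
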